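/- arXiv:1908.06077 — 2 statements merged into one kernel-verified Lean document; each statement's English description precedes it below -/
import Mathlib

section
/- Let d ≥ 1 and s ≥ 1 be integers, let p ∈ (0,1), and let v ∈ ℝ^d be nonzero. The nonuniform quantization of v with the NUQSGD levels L̂ satisfies E[‖Q_s(v) − v‖²] ≤ (1/8 + K_p · 2^{(p−2)s} · d^{1−p/2}) · ‖v‖², where K_p = ((1/p)/(2/p − 1)) · ((1/p − 1)/(2/p − 1))^{1−p}. -/
open MeasureTheory Real

noncomputable section

/-- The index of the quantization bin containing the normalized coordinate `r`. -/
def levIdx (l : ℕ → ℝ) (s : ℕ) (r : ℝ) : ℕ := sSup {j | j ≤ s ∧ l j ≤ r}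

/-- The probability of rounding the normalized coordinate `r` up to the next level. -/
def quantP (l : ℕ → ℝ) (s : ℕ) (r : ℝ) : ℝ :=
  (r - l (levIdx l s r)) / (l (levIdx l s r + 1) - l (levIdx l s r))

/-- The (random) nonuniform quantization of `v`, driven by the uniform noise vector `u`:
coordinate `i` is `‖v‖ · sign vᵢ · hᵢ`, where `hᵢ` is the upper adjacent level with
probability `p(rᵢ)` and the lower adjacent level otherwise. -/
def quant (l : ℕ → ℝ) (s : ℕ) {d : ℕ} (v : EuclideanSpace ℝ (Fin d))
    (u : Fin d → ℝ) : EuclideanSpace ℝ (Fin d) :=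
  WithLp.toLp 2 fun i =>
    ‖v‖ * Real.sign (v i) *
      (if u i ≤ quantP l s (|v i| / ‖v‖)
       then l (levIdx l s (|v i| / ‖v‖) + 1)
       else l (levIdx l s (|v i| / ‖v‖)))

/-- The uniform probability measure on the cube `[0,1]^d`, driving the quantization noise. -/
def unifCube (d : ℕ) : Measure (Fin d → ℝ) :=
  Measure.pi fun _ => volume.restrict (Set.Icc (0:ℝ) 1)

/-- `l` is a valid sequence of quantization levels `l 0 = 0 < l 1 < ⋯ < l (s+1) = 1`. -/
def IsLevels (l : ℕ → ℝ) (s : ℕ) : Prop :=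
  l 0 = 0 ∧ l (s+1) = 1 ∧ ∀ j ≤ s, l j < l (j+1)

/-- The exponentially spaced NUQSGD levels `(0, 2^{-s}, 2^{1-s}, …, 2^{-1}, 1)`:
`l 0 = 0` and `l j = 2^{j-1-s}` for `j = 1, …, s+1`. -/
def nuqLevels (s : ℕ) : ℕ → ℝ :=
  fun j => if j = 0 then 0 else 2 ^ ((j : ℤ) - 1 - (s : ℤ))

lemma nuq_zero (s : ℕ) : nuqLevels s 0 = 0 := by simp [nuqLevels]

lemma nuq_nonneg (s j : ℕ) : 0 ≤ nuqLevels s j := by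
  unfold nuqLevels; split
  · exact le_refl 0
  · positivity

lemma nuq_top (s : ℕ) : nuqLevels s (s+1) = 1 := by
  simp [nuqLevels]

lemma nuq_mono (s : ℕ) {j k : ℕ} (h : j ≤ k) : nuqLevels s j ≤ nuqLevels s k := by
  rcases Nat.eq_zero_or_pos j with rfl | hj
  · rw [nuq_zero]; exact nuq_nonneg s k
  · have hj' : j ≠ 0 := hj.ne'
    have hk : k ≠ 0 := by omega
    unfold nuqLevels
    simp only [if_neg hj', if_neg hk]
    apply zpow_le_zpow_right₀ (by norm_num) (by omega)

lemma levIdx_le (s : ℕ) {r : ℝ} (hr0 : 0 ≤ r) :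
    levIdx (nuqLevels s) s r ≤ s ∧ nuqLevels s (levIdx (nuqLevels s) s r) ≤ r := by
  have hmem : levIdx (nuqLevels s) s r ∈ {j | j ≤ s ∧ nuqLevels s j ≤ r} :=
    Nat.sSup_mem ⟨0, by simp [nuq_zero, hr0]⟩ ⟨s, fun j hj => hj.1⟩
  exact hmem

lemma levIdx_upper (s : ℕ) {r : ℝ} (hr0 : 0 ≤ r) (hr1 : r ≤ 1) :
    r ≤ nuqLevels s (levIdx (nuqLevels s) s r + 1) := by
  set j := levIdx (nuqLevels s) s r with hj
  rcases eq_or_lt_of_le (levIdx_le s hr0).1 with he | hlt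
  · rw [show j = s from he, nuq_top]; exact hr1
  · by_contra hcon
    push_neg at hcon
    have hmem : j + 1 ∈ {k | k ≤ s ∧ nuqLevels s k ≤ r} := ⟨by omega, hcon.le⟩
    have : j + 1 ≤ j := le_csSup ⟨s, fun k hk => hk.1⟩ hmem
    omega

instance : IsProbabilityMeasure (volume.restrict (Set.Icc (0:ℝ) 1)) :=
  ⟨by simp⟩

instance (d : ℕ) : IsProbabilityMeasure (unifCube d) := by
  unfold unifCube; infer_instance

lemma map_eval_unifCube {d : ℕ} (i : Fin d) :
    Measure.map (fun u : Fin d → ℝ => u i) (unifCube d) =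
      volume.restrict (Set.Icc (0:ℝ) 1) := by
  ext t ht
  rw [Measure.map_apply (measurable_pi_apply i) ht]
  have hpre : (fun u : Fin d → ℝ => u i) ⁻¹' t =
      Set.pi Set.univ (Function.update (fun _ : Fin d => (Set.univ : Set ℝ)) i t) := by
    ext u
    simp only [Set.mem_preimage, Set.mem_univ_pi]
    constructor
    · intro h j
      rcases eq_or_ne j i with rfl | hji
      · simpa using h
      · simp [Function.update_of_ne hji]
    · intro h
      have := h i
      simpa using this
  rw [hpre, unifCube, Measure.pi_pi]
  rw [Finset.prod_eq_single i]
  · simp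
  · intro j _ hji
    simp [Function.update_of_ne hji]
  · simp

lemma integral_eval {d : ℕ} (i : Fin d) (g : ℝ → ℝ) (hg : Measurable g) :
    ∫ u, g (u i) ∂(unifCube d) = ∫ t, g t ∂(volume.restrict (Set.Icc (0:ℝ) 1)) := by
  rw [← map_eval_unifCube i,
    integral_map (measurable_pi_apply i).aemeasurable hg.aestronglyMeasurable]

lemma integral_ite_le {P a b : ℝ} (h0 : 0 ≤ P) (h1 : P ≤ 1) :
    ∫ t, (if t ≤ P then a else b) ∂(volume.restrict (Set.Icc (0:ℝ) 1))
      = P * a + (1 - P) * b := by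
  have hfe : (fun t : ℝ => if t ≤ P then a else b) =
      (Set.Iic P).indicator (fun _ => a) + (Set.Ioi P).indicator (fun _ => b) := by
    funext t
    by_cases h : t ≤ P
    · simp [Set.indicator_of_mem, h, Set.mem_Iic, Set.mem_Ioi, not_lt.mpr h]
    · simp [Set.indicator_of_notMem, h, Set.mem_Iic, Set.mem_Ioi, lt_of_not_ge h]
  rw [hfe]
  show (∫ t, ((Set.Iic P).indicator (fun _ => a) t + (Set.Ioi P).indicator (fun _ => b) t)
      ∂(volume.restrict (Set.Icc (0:ℝ) 1))) = P * a + (1 - P) * b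
  rw [integral_add ((integrable_const a).indicator measurableSet_Iic)
      ((integrable_const b).indicator measurableSet_Ioi)]
  rw [integral_indicator_const a measurableSet_Iic, integral_indicator_const b measurableSet_Ioi]
  rw [measureReal_def, measureReal_def]
  rw [Measure.restrict_apply measurableSet_Iic, Measure.restrict_apply measurableSet_Ioi]
  have h1' : Set.Iic P ∩ Set.Icc (0:ℝ) 1 = Set.Icc 0 P := by
    ext x; simp only [Set.mem_inter_iff, Set.mem_Iic, Set.mem_Icc]
    constructor
    · rintro ⟨h, h', _⟩; exact ⟨h', h⟩
    · rintro ⟨h', h⟩; exact ⟨h, h', h.trans h1⟩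
  have h2' : Set.Ioi P ∩ Set.Icc (0:ℝ) 1 = Set.Ioc P 1 := by
    ext x; simp only [Set.mem_inter_iff, Set.mem_Ioi, Set.mem_Icc, Set.mem_Ioc]
    constructor
    · rintro ⟨h, _, h'⟩; exact ⟨h, h'⟩
    · rintro ⟨h, h'⟩; exact ⟨h, h0.trans h.le, h'⟩
  rw [h1', h2', Real.volume_Icc, Real.volume_Ioc]
  rw [ENNReal.toReal_ofReal (by linarith), ENNReal.toReal_ofReal (by linarith)]
  simp [smul_eq_mul]

lemma amgm_aux {p : ℝ} (hp0 : 0 < p) (hp1 : p < 1) {x : ℝ} (hx0 : 0 ≤ x) (hx1 : x ≤ 1) :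
    x ^ (1 - p) * (1 - x) ≤ ((1 - p) / (2 - p)) ^ (1 - p) * (1 / (2 - p)) := by
  set w1 : ℝ := (1 - p) / (2 - p) with hw1def
  set w2 : ℝ := 1 / (2 - p) with hw2def
  have h2p : (0:ℝ) < 2 - p := by linarith
  have hw1 : 0 < w1 := div_pos (by linarith) h2p
  have hw2 : 0 < w2 := by positivity
  have hsum : w1 + w2 = 1 := by rw [hw1def, hw2def]; field_simp; ring
  have h1x : (0:ℝ) ≤ 1 - x := by linarith
  have key := Real.geom_mean_le_arith_mean2_weighted hw1.le hw2.le
    (div_nonneg hx0 hw1.le) (div_nonneg h1x hw2.le) hsum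
  have hrhs : w1 * (x / w1) + w2 * ((1 - x) / w2) = 1 := by
    field_simp
    ring
  rw [hrhs] at key
  rw [Real.div_rpow hx0 hw1.le, Real.div_rpow h1x hw2.le] at key
  have key2 : x ^ w1 * (1 - x) ^ w2 ≤ w1 ^ w1 * w2 ^ w2 := by
    have hpos : 0 < w1 ^ w1 * w2 ^ w2 := by
      have := Real.rpow_pos_of_pos hw1 w1
      have := Real.rpow_pos_of_pos hw2 w2
      positivity
    rw [div_mul_div_comm] at key
    calc x ^ w1 * (1 - x) ^ w2 = (x ^ w1 * (1 - x) ^ w2) / (w1 ^ w1 * w2 ^ w2) *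
          (w1 ^ w1 * w2 ^ w2) := by field_simp
      _ ≤ 1 * (w1 ^ w1 * w2 ^ w2) := mul_le_mul_of_nonneg_right key hpos.le
      _ = w1 ^ w1 * w2 ^ w2 := one_mul _
  -- raise both sides to the power 2 - p
  have hL : (x ^ w1 * (1 - x) ^ w2) ^ (2 - p) = x ^ (1 - p) * (1 - x) := by
    rw [Real.mul_rpow (Real.rpow_nonneg hx0 _) (Real.rpow_nonneg h1x _),
      ← Real.rpow_mul hx0, ← Real.rpow_mul h1x]
    have e1 : w1 * (2 - p) = 1 - p := by rw [hw1def]; exact div_mul_cancel₀ _ h2p.ne'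
    have e2 : w2 * (2 - p) = 1 := by rw [hw2def]; field_simp
    rw [e1, e2, Real.rpow_one]
  have hR : (w1 ^ w1 * w2 ^ w2) ^ (2 - p) = w1 ^ (1 - p) * w2 := by
    rw [Real.mul_rpow (Real.rpow_nonneg hw1.le _) (Real.rpow_nonneg hw2.le _),
      ← Real.rpow_mul hw1.le, ← Real.rpow_mul hw2.le]
    have e1 : w1 * (2 - p) = 1 - p := by rw [hw1def]; exact div_mul_cancel₀ _ h2p.ne'
    have e2 : w2 * (2 - p) = 1 := by rw [hw2def]; field_simp
    rw [e1, e2, Real.rpow_one]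
  calc x ^ (1 - p) * (1 - x) = (x ^ w1 * (1 - x) ^ w2) ^ (2 - p) := hL.symm
    _ ≤ (w1 ^ w1 * w2 ^ w2) ^ (2 - p) := by
        apply Real.rpow_le_rpow (by positivity) key2 (by linarith)
    _ = w1 ^ (1 - p) * w2 := hR

lemma small_bin_bound {p : ℝ} (hp0 : 0 < p) (hp1 : p < 1) {m r : ℝ}
    (hm : 0 < m) (hr0 : 0 ≤ r) (hrm : r ≤ m) :
    r * (m - r) ≤ ((1 - p) / (2 - p)) ^ (1 - p) * (1 / (2 - p)) * (m ^ (2 - p) * r ^ p) := by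
  rcases eq_or_lt_of_le hr0 with rfl | hr
  · simp [Real.zero_rpow hp0.ne']
  set K0 : ℝ := ((1 - p) / (2 - p)) ^ (1 - p) * (1 / (2 - p)) with hK0
  have hK0pos : 0 < K0 := by
    have h2p : (0:ℝ) < 2 - p := by linarith
    have := Real.rpow_pos_of_pos (div_pos (by linarith : (0:ℝ) < 1 - p) h2p) (1 - p)
    positivity
  set x : ℝ := r / m with hxdef
  have hx : 0 < x := div_pos hr hm
  have hx1 : x ≤ 1 := (div_le_one hm).mpr hrm
  have key : x ^ (1 - p) * (1 - x) ≤ K0 := amgm_aux hp0 hp1 hx.le hx1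
  have hxx : x ^ (1 - p) * x ^ p = x := by
    rw [← Real.rpow_add hx]; norm_num
  have hrm' : r = x * m := by rw [hxdef]; field_simp
  have hmul : (x ^ (1 - p) * (1 - x)) * (x ^ p * m ^ 2) ≤ K0 * (x ^ p * m ^ 2) :=
    mul_le_mul_of_nonneg_right key (by positivity)
  have hlhs : (x ^ (1 - p) * (1 - x)) * (x ^ p * m ^ 2) = r * (m - r) := by
    rw [hrm']
    linear_combination ((1 - x) * m ^ 2) * hxx
  have hrhs : K0 * (x ^ p * m ^ 2) = K0 * (m ^ (2 - p) * r ^ p) := by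
    rw [hrm', Real.mul_rpow hx.le hm.le]
    have hmm : m ^ (2 - p) * m ^ p = m ^ 2 := by
      rw [← Real.rpow_add hm]
      norm_num [Real.rpow_two]
    calc K0 * (x ^ p * m ^ 2) = K0 * (x ^ p * (m ^ (2 - p) * m ^ p)) := by rw [hmm]
      _ = K0 * (m ^ (2 - p) * (x ^ p * m ^ p)) := by ring
  calc r * (m - r) = x ^ (1 - p) * (1 - x) * (x ^ p * m ^ 2) := hlhs.symm
    _ ≤ K0 * (m ^ (2 - p) * r ^ p) := by rw [← hrhs]; exact mul_le_mul_of_nonneg_right key (by positivity)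

lemma large_bin_bound {lo r : ℝ} (hlo : 0 < lo) (h1 : lo ≤ r) (h2 : r ≤ 2 * lo) :
    (r - lo) * (2 * lo - r) ≤ r ^ 2 / 8 := by
  nlinarith [sq_nonneg (3 * r - 4 * lo)]

lemma sum_rpow_le {d : ℕ} (hd : 1 ≤ d) {p : ℝ} (hp0 : 0 < p) (hp1 : p < 1)
    (r : Fin d → ℝ) (hr : ∀ i, 0 ≤ r i) (hsum : ∑ i, r i ^ 2 = 1) :
    ∑ i, r i ^ p ≤ (d : ℝ) ^ (1 - p / 2) := by
  have hdpos : (0:ℝ) < d := by exact_mod_cast hd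
  have hmean := Real.arith_mean_le_rpow_mean Finset.univ (fun _ => 1 / (d:ℝ))
    (fun i => r i ^ p) (fun i _ => by positivity)
    (by simp [Finset.card_univ]; field_simp)
    (by
      intro i _
      exact Real.rpow_nonneg (hr i) p)
    (show (1:ℝ) ≤ 2 / p by rw [le_div_iff₀ hp0]; linarith)
  have hzq : ∀ i : Fin d, (r i ^ p) ^ (2 / p) = r i ^ 2 := by
    intro i
    rw [← Real.rpow_mul (hr i), show p * (2 / p) = 2 by field_simp, Real.rpow_two]
  have hmean' : ∑ i, (1 / (d:ℝ)) * r i ^ p ≤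
      (∑ i, (1 / (d:ℝ)) * (r i ^ p) ^ (2 / p)) ^ (1 / (2 / p)) := by simpa using hmean
  have h1 : ∑ i, (1 / (d:ℝ)) * (r i ^ p) ^ (2 / p) = 1 / d := by
    simp_rw [hzq]
    rw [← Finset.mul_sum, hsum, mul_one]
  rw [h1, one_div_div] at hmean'
  calc ∑ i, r i ^ p = (d:ℝ) * ∑ i, (1 / (d:ℝ)) * r i ^ p := by
        rw [← Finset.mul_sum, ← mul_assoc, mul_one_div, div_self hdpos.ne', one_mul]
    _ ≤ (d:ℝ) * ((1 / (d:ℝ)) ^ (p / 2)) := mul_le_mul_of_nonneg_left hmean' hdpos.le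
    _ = (d:ℝ) ^ (1 - p / 2) := by
        have hsub : (d:ℝ) ^ (1 - p / 2) = (d:ℝ) / (d:ℝ) ^ (p / 2) := by
          rw [Real.rpow_sub hdpos, Real.rpow_one]
        rw [hsub, one_div, Real.inv_rpow hdpos.le]
        exact (div_eq_mul_inv _ _).symm

lemma nuq_strict (s : ℕ) {j : ℕ} (hj : j ≤ s) : nuqLevels s j < nuqLevels s (j+1) := by
  rcases Nat.eq_zero_or_pos j with rfl | hjpos
  · rw [nuq_zero]; unfold nuqLevels; norm_num
  · unfold nuqLevels
    rw [if_neg hjpos.ne', if_neg (by omega)]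
    apply zpow_lt_zpow_right₀ (by norm_num) (by omega)

lemma coord_generic {d : ℕ} (i : Fin d) (c w lo hi r : ℝ)
    (hlo : lo ≤ r) (hhi : r ≤ hi) (hτ : lo < hi) (hcw : c * r = w) :
    Integrable (fun u : Fin d → ℝ =>
        (c * (if u i ≤ (r - lo) / (hi - lo) then hi else lo) - w) ^ 2) (unifCube d) ∧
    (∫ u, (c * (if u i ≤ (r - lo) / (hi - lo) then hi else lo) - w) ^ 2 ∂(unifCube d))
      = c ^ 2 * ((r - lo) * (hi - r)) := by
  set P : ℝ := (r - lo) / (hi - lo) with hPdef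
  have hP0 : 0 ≤ P := div_nonneg (by linarith) (by linarith)
  have hP1 : P ≤ 1 := (div_le_one (by linarith)).mpr (by linarith)
  set A : ℝ := (c * hi - w) ^ 2 with hAdef
  set B : ℝ := (c * lo - w) ^ 2 with hBdef
  set g : ℝ → ℝ := fun t => if t ≤ P then A else B with hgdef
  have hfun : (fun u : Fin d → ℝ => (c * (if u i ≤ P then hi else lo) - w) ^ 2)
      = fun u => g (u i) := by
    funext u
    rw [hgdef]
    dsimp only
    split_ifs <;> rfl
  have hg : Measurable g := Measurable.ite measurableSet_Iic measurable_const measurable_const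
  have hgA : ∀ t, |g t| ≤ |A| + |B| := by
    intro t
    rw [hgdef]
    dsimp only
    split_ifs
    · exact le_add_of_nonneg_right (abs_nonneg _) |>.trans_eq' rfl
    · exact le_add_of_nonneg_left (abs_nonneg _) |>.trans_eq' rfl
  have hint : Integrable (fun u : Fin d → ℝ => g (u i)) (unifCube d) := by
    refine (integrable_const (|A| + |B|)).mono'
      (hg.comp (measurable_pi_apply i)).aestronglyMeasurable ?_
    filter_upwards with u
    rw [Real.norm_eq_abs]
    exact hgA (u i)
  constructor
  · rw [hfun]; exact hint
  · rw [show (∫ u, (c * (if u i ≤ P then hi else lo) - w) ^ 2 ∂(unifCube d))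
        = ∫ u, g (u i) ∂(unifCube d) by rw [← hfun]]
    rw [integral_eval i g hg]
    rw [hgdef]
    rw [integral_ite_le hP0 hP1]
    rw [hAdef, hBdef, hPdef, ← hcw]
    have hne : hi - lo ≠ 0 := by linarith
    field_simp
    ring

lemma norm_sq_eq {d : ℕ} (v : EuclideanSpace ℝ (Fin d)) : ‖v‖ ^ 2 = ∑ i, (v i) ^ 2 := by
  rw [EuclideanSpace.norm_eq, Real.sq_sqrt (by positivity)]
  exact Finset.sum_congr rfl fun i _ => by rw [Real.norm_eq_abs, sq_abs]

lemma abs_coord_le {d : ℕ} (v : EuclideanSpace ℝ (Fin d)) (i : Fin d) : |v i| ≤ ‖v‖ := by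
  have h2 : (v i) ^ 2 ≤ ‖v‖ ^ 2 := by
    rw [norm_sq_eq]
    exact Finset.single_le_sum (f := fun j => (v j) ^ 2) (fun j _ => sq_nonneg _)
      (Finset.mem_univ i)
  have := abs_nonneg (v i)
  nlinarith [norm_nonneg v, abs_nonneg (v i), sq_abs (v i)]

lemma coord_key {d s : ℕ} (v : EuclideanSpace ℝ (Fin d)) (hv : v ≠ 0) (i : Fin d) :
    Integrable (fun u : Fin d → ℝ => (quant (nuqLevels s) s v u i - v i) ^ 2) (unifCube d) ∧
    (∫ u, (quant (nuqLevels s) s v u i - v i) ^ 2 ∂(unifCube d))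
      = ‖v‖ ^ 2 * ((|v i| / ‖v‖ - nuqLevels s (levIdx (nuqLevels s) s (|v i| / ‖v‖))) *
          (nuqLevels s (levIdx (nuqLevels s) s (|v i| / ‖v‖) + 1) - |v i| / ‖v‖)) := by
  have hn : (0:ℝ) < ‖v‖ := norm_pos_iff.mpr hv
  set r : ℝ := |v i| / ‖v‖ with hrdef
  set j : ℕ := levIdx (nuqLevels s) s r with hjdef
  set lo : ℝ := nuqLevels s j with hlodef
  set hi : ℝ := nuqLevels s (j+1) with hhidef
  set c : ℝ := ‖v‖ * Real.sign (v i) with hcdef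
  have hr0 : 0 ≤ r := by rw [hrdef]; positivity
  have hr1 : r ≤ 1 := by
    rw [hrdef, div_le_one hn]; exact abs_coord_le v i
  have hjs := levIdx_le s hr0
  have hlor : lo ≤ r := hjs.2
  have hrhi : r ≤ hi := levIdx_upper s hr0 hr1
  have hτ : lo < hi := nuq_strict s hjs.1
  have hcw : c * r = v i := by
    rcases eq_or_ne (v i) 0 with h0 | h0
    · rw [h0, hrdef, h0]; simp
    · rw [hcdef, hrdef]
      rcases h0.lt_or_gt with hlt | hlt
      · rw [Real.sign_of_neg hlt, abs_of_neg hlt]; field_simp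
      · rw [Real.sign_of_pos hlt, abs_of_pos hlt]; field_simp
  have hfun : (fun u : Fin d → ℝ => (quant (nuqLevels s) s v u i - v i) ^ 2)
      = fun u : Fin d → ℝ => (c * (if u i ≤ (r - lo) / (hi - lo) then hi else lo) - v i) ^ 2 :=
    rfl
  have hgen := coord_generic i c (v i) lo hi r hlor hrhi hτ hcw
  constructor
  · rw [hfun]; exact hgen.1
  · rw [show (∫ u, (quant (nuqLevels s) s v u i - v i) ^ 2 ∂(unifCube d)) =
        ∫ u, (c * (if u i ≤ (r - lo) / (hi - lo) then hi else lo) - v i) ^ 2 ∂(unifCube d)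
        from rfl]
    rw [hgen.2]
    rcases eq_or_ne (v i) 0 with h0 | h0
    · have hr00 : r = 0 := by rw [hrdef, h0]; simp
      have hlo0 : lo = 0 := le_antisymm (hr00 ▸ hlor) (nuq_nonneg s j)
      rw [hr00, hlo0]
      ring
    · have hsgn : Real.sign (v i) ^ 2 = 1 := by
        rcases Real.sign_apply_eq_of_ne_zero (v i) h0 with h | h <;> rw [h] <;> norm_num
      rw [hcdef, mul_pow, hsgn, mul_one]

lemma err_bound {s : ℕ} {p : ℝ} (hp0 : 0 < p) (hp1 : p < 1)
    {r : ℝ} (hr0 : 0 ≤ r) (hr1 : r ≤ 1) :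
    (r - nuqLevels s (levIdx (nuqLevels s) s r)) *
      (nuqLevels s (levIdx (nuqLevels s) s r + 1) - r)
      ≤ r ^ 2 / 8 + ((1 - p) / (2 - p)) ^ (1 - p) * (1 / (2 - p)) *
        ((2:ℝ) ^ ((p - 2) * (s:ℝ)) * r ^ p) := by
  have h2p : (0:ℝ) < 2 - p := by linarith
  have hK0 : 0 ≤ ((1 - p) / (2 - p)) ^ (1 - p) * (1 / (2 - p)) :=
    mul_nonneg (Real.rpow_nonneg (div_nonneg (by linarith) h2p.le) _) (by positivity)
  set j := levIdx (nuqLevels s) s r with hjdef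
  have hjs := levIdx_le s hr0
  have hlor : nuqLevels s j ≤ r := hjs.2
  have hrhi : r ≤ nuqLevels s (j+1) := levIdx_upper s hr0 hr1
  rcases Nat.eq_zero_or_pos j with hj0 | hjpos
  · -- small bin
    have hlo : nuqLevels s j = 0 := by rw [hj0, nuq_zero]
    have hm : nuqLevels s (j+1) = (2:ℝ) ^ (-(s:ℝ)) := by
      rw [hj0]
      unfold nuqLevels
      norm_num
    have hmpos : (0:ℝ) < (2:ℝ) ^ (-(s:ℝ)) := Real.rpow_pos_of_pos (by norm_num) _
    have hmp : ((2:ℝ) ^ (-(s:ℝ))) ^ (2 - p) = (2:ℝ) ^ ((p - 2) * (s:ℝ)) := by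
      rw [← Real.rpow_mul (by norm_num)]
      ring_nf
    have hsmall := small_bin_bound hp0 hp1 hmpos hr0 (hm ▸ hrhi)
    calc (r - nuqLevels s j) * (nuqLevels s (j+1) - r)
        = r * ((2:ℝ) ^ (-(s:ℝ)) - r) := by rw [hlo, hm]; ring
      _ ≤ ((1 - p) / (2 - p)) ^ (1 - p) * (1 / (2 - p)) *
            (((2:ℝ) ^ (-(s:ℝ))) ^ (2 - p) * r ^ p) := hsmall
      _ = ((1 - p) / (2 - p)) ^ (1 - p) * (1 / (2 - p)) *
            ((2:ℝ) ^ ((p - 2) * (s:ℝ)) * r ^ p) := by rw [hmp]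
      _ ≤ r ^ 2 / 8 + ((1 - p) / (2 - p)) ^ (1 - p) * (1 / (2 - p)) *
            ((2:ℝ) ^ ((p - 2) * (s:ℝ)) * r ^ p) := le_add_of_nonneg_left (by positivity)
  · -- large bin
    have hlo : nuqLevels s j = (2:ℝ) ^ ((j:ℤ) - 1 - (s:ℤ)) := by
      unfold nuqLevels; rw [if_neg hjpos.ne']
    have hlopos : (0:ℝ) < nuqLevels s j := by rw [hlo]; positivity
    have hhi : nuqLevels s (j+1) = 2 * nuqLevels s j := by
      unfold nuqLevels
      rw [if_neg (by omega), if_neg hjpos.ne']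
      rw [show ((j:ℕ) + 1 : ℕ) = j + 1 from rfl]
      push_cast
      rw [show ((j:ℤ) + 1 - 1 - (s:ℤ)) = 1 + ((j:ℤ) - 1 - (s:ℤ)) by ring]
      rw [zpow_add₀ (two_ne_zero) 1 ((j:ℤ) - 1 - (s:ℤ)), zpow_one]
    have hlarge := large_bin_bound hlopos hlor (hhi ▸ hrhi)
    calc (r - nuqLevels s j) * (nuqLevels s (j+1) - r)
        = (r - nuqLevels s j) * (2 * nuqLevels s j - r) := by rw [hhi]
      _ ≤ r ^ 2 / 8 := hlarge
      _ ≤ r ^ 2 / 8 + ((1 - p) / (2 - p)) ^ (1 - p) * (1 / (2 - p)) *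
            ((2:ℝ) ^ ((p - 2) * (s:ℝ)) * r ^ p) := by
          apply le_add_of_nonneg_right
          apply mul_nonneg hK0
          exact mul_nonneg (Real.rpow_nonneg (by norm_num) _) (Real.rpow_nonneg hr0 _)

/-- **Variance bound in terms of `K_p`** (equation (18)): for the NUQSGD levels and any
`p ∈ (0,1)`, `E[‖Q_s(v) − v‖²] ≤ (1/8 + K_p 2^{(p−2)s} d^{1−p/2}) ‖v‖²` where
`K_p = ((1/p)/(2/p − 1)) ((1/p − 1)/(2/p − 1))^{1−p}`. -/
theorem nuq_variance_bound_Kp (d s : ℕ) (hd : 1 ≤ d) (hs : 1 ≤ s)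
    (p : ℝ) (hp0 : 0 < p) (hp1 : p < 1)
    (v : EuclideanSpace ℝ (Fin d)) (hv : v ≠ 0) :
    (∫ u, ‖quant (nuqLevels s) s v u - v‖ ^ 2 ∂(unifCube d)) ≤
      (1 / 8 +
        ((1 / p) / (2 / p - 1)) * ((1 / p - 1) / (2 / p - 1)) ^ (1 - p) *
          (2:ℝ) ^ ((p - 2) * s) * (d:ℝ) ^ (1 - p / 2)) * ‖v‖ ^ 2 := by
  have hn : (0:ℝ) < ‖v‖ := norm_pos_iff.mpr hv
  have h2p : (0:ℝ) < 2 - p := by linarith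
  set K0 : ℝ := ((1 - p) / (2 - p)) ^ (1 - p) * (1 / (2 - p)) with hK0def
  have hK0 : 0 ≤ K0 :=
    mul_nonneg (Real.rpow_nonneg (div_nonneg (by linarith) h2p.le) _) (by positivity)
  set m2 : ℝ := (2:ℝ) ^ ((p - 2) * (s:ℝ)) with hm2def
  have hm2 : 0 < m2 := Real.rpow_pos_of_pos (by norm_num) _
  have hKeq : ((1 / p) / (2 / p - 1)) * ((1 / p - 1) / (2 / p - 1)) ^ (1 - p) = K0 := by
    have hq : (0:ℝ) < 2 / p - 1 := by
      rw [sub_pos, lt_div_iff₀ hp0]; linarith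
    have h1 : (1 / p) / (2 / p - 1) = 1 / (2 - p) := by
      rw [div_eq_div_iff hq.ne' (by linarith : (2:ℝ) - p ≠ 0)]
      field_simp
    have h2 : (1 / p - 1) / (2 / p - 1) = (1 - p) / (2 - p) := by
      rw [div_eq_div_iff hq.ne' (by linarith : (2:ℝ) - p ≠ 0)]
      field_simp
    rw [h1, h2, hK0def]
    ring
  have hr0 : ∀ i : Fin d, 0 ≤ |v i| / ‖v‖ := fun i => by positivity
  have hr1 : ∀ i : Fin d, |v i| / ‖v‖ ≤ 1 := fun i =>
    (div_le_one hn).mpr (abs_coord_le v i)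
  have hrsum : ∑ i, (|v i| / ‖v‖) ^ 2 = 1 := by
    simp only [div_pow, sq_abs]
    rw [← Finset.sum_div, ← norm_sq_eq v]
    field_simp
  have hrp := sum_rpow_le hd hp0 hp1 (fun i => |v i| / ‖v‖) hr0 hrsum
  calc (∫ u, ‖quant (nuqLevels s) s v u - v‖ ^ 2 ∂(unifCube d))
      = ∫ u, ∑ i, (quant (nuqLevels s) s v u i - v i) ^ 2 ∂(unifCube d) := by
        apply integral_congr_ae
        filter_upwards with u
        exact norm_sq_eq _
    _ = ∑ i, ∫ u, (quant (nuqLevels s) s v u i - v i) ^ 2 ∂(unifCube d) :=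
        integral_finset_sum _ (fun i _ => (coord_key v hv i).1)
    _ = ∑ i, ‖v‖ ^ 2 * ((|v i| / ‖v‖ - nuqLevels s (levIdx (nuqLevels s) s (|v i| / ‖v‖))) *
          (nuqLevels s (levIdx (nuqLevels s) s (|v i| / ‖v‖) + 1) - |v i| / ‖v‖)) :=
        Finset.sum_congr rfl (fun i _ => (coord_key v hv i).2)
    _ ≤ ∑ i, ‖v‖ ^ 2 * ((|v i| / ‖v‖) ^ 2 / 8 + K0 * (m2 * (|v i| / ‖v‖) ^ p)) := by
        apply Finset.sum_le_sum
        intro i _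
        exact mul_le_mul_of_nonneg_left (err_bound hp0 hp1 (hr0 i) (hr1 i)) (by positivity)
    _ = ‖v‖ ^ 2 * ((∑ i, (|v i| / ‖v‖) ^ 2) / 8 + K0 * m2 * ∑ i, (|v i| / ‖v‖) ^ p) := by
        rw [← Finset.mul_sum]
        congr 1
        rw [Finset.sum_add_distrib, ← Finset.sum_div]
        congr 1
        rw [Finset.mul_sum]
        exact Finset.sum_congr rfl fun i _ => by ring
    _ ≤ ‖v‖ ^ 2 * (1 / 8 + K0 * m2 * (d:ℝ) ^ (1 - p / 2)) := by
        apply mul_le_mul_of_nonneg_left _ (by positivity)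
        rw [hrsum]
        exact add_le_add_right (mul_le_mul_of_nonneg_left hrp (by positivity)) _
    _ = (1 / 8 + ((1 / p) / (2 / p - 1)) * ((1 / p - 1) / (2 / p - 1)) ^ (1 - p) *
          m2 * (d:ℝ) ^ (1 - p / 2)) * ‖v‖ ^ 2 := by
        rw [hKeq]
        ring
end
end

section
/- Let d ≥ 1 and s ≥ 1 be integers and suppose there exists an integer j with 0 ≤ j ≤ s−1 such that 2^{j−s} = 3/(4√d). Then every constant vector v = (r, r, …, r) ∈ ℝ^d with r ≠ 0 satisfies, for the nonuniform quantization with the NUQSGD levels L̂, E[‖Q_s(v) − v‖²] = ‖v‖²/8. -/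
open MeasureTheory Real

noncomputable section

lemma pi_map_eval' {ι : Type*} [Fintype ι] [DecidableEq ι] {α : ι → Type*}
    [∀ i, MeasurableSpace (α i)] (μ : ∀ i, Measure (α i)) [∀ i, IsProbabilityMeasure (μ i)]
    (i : ι) : (Measure.pi μ).map (Function.eval i) = μ i := by
  ext s hs
  rw [Measure.map_apply (measurable_pi_apply i) hs, Set.eval_preimage, Measure.pi_pi]
  rw [Finset.prod_eq_single i (fun b _ hb => by simp [Function.update_of_ne hb])
    (fun h => absurd (Finset.mem_univ i) h)]
  simp


/-- **Theorem 12 (Lower bound in the regime of large `s`)**: with the NUQSGD levels, if there is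
an integer `0 ≤ j ≤ s−1` with `2^{j−s} = 3/(4√d)`, then every nonzero constant vector
`v = (r, …, r)` satisfies `E[‖Q_s(v) − v‖²] = ‖v‖²/8`. -/
theorem nuq_variance_exact_large_s (d s : ℕ) (hd : 1 ≤ d) (hs : 1 ≤ s)
    (hex : ∃ j : ℕ, j ≤ s - 1 ∧ (2:ℝ) ^ ((j:ℤ) - (s:ℤ)) = 3 / (4 * Real.sqrt d))
    (r : ℝ) (hr : r ≠ 0)
    (v : EuclideanSpace ℝ (Fin d)) (hv : ∀ i, v i = r) :
    (∫ u, ‖quant (nuqLevels s) s v u - v‖ ^ 2 ∂(unifCube d)) = ‖v‖ ^ 2 / 8 := by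
  obtain ⟨j, hjs, hjx⟩ := hex
  have hjs' : j + 1 ≤ s := by omega
  set x : ℝ := (2:ℝ) ^ ((j:ℤ) - (s:ℤ)) with hxd
  have hx0 : 0 < x := by positivity
  have hdR : (0:ℝ) < d := by exact_mod_cast hd
  have hsd : (0:ℝ) < Real.sqrt d := Real.sqrt_pos.mpr hdR
  set R : ℝ := 1 / Real.sqrt d with hRd
  have hRx : R = 4/3 * x := by rw [hRd, hjx]; field_simp
  have hnorm : ‖v‖ = Real.sqrt d * |r| := by
    rw [EuclideanSpace.norm_eq]
    have : ∀ i : Fin d, ‖v i‖ ^ 2 = |r| ^ 2 := by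
      intro i; rw [hv i, Real.norm_eq_abs]
    rw [Finset.sum_congr rfl (fun i _ => this i), Finset.sum_const, Finset.card_univ,
      Fintype.card_fin, nsmul_eq_mul, Real.sqrt_mul (by positivity), Real.sqrt_sq (abs_nonneg r)]
  have hvne : ‖v‖ ≠ 0 := by
    rw [hnorm]; positivity
  have hRi : |r| / ‖v‖ = R := by
    rw [hnorm, hRd]
    field_simp [abs_ne_zero.mpr hr]
  -- level index computation
  have hlow : nuqLevels s (j + 1) = x := by
    have h1 : ((j + 1 : ℕ) : ℤ) - 1 - (s : ℤ) = (j : ℤ) - (s : ℤ) := by push_cast; ring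
    have h2 : nuqLevels s (j + 1) = 2 ^ (((j + 1 : ℕ) : ℤ) - 1 - (s : ℤ)) :=
      if_neg (by omega)
    rw [h2, h1]
  have hup : nuqLevels s (j + 1 + 1) = 2 * x := by
    have h1 : ((j + 1 + 1 : ℕ) : ℤ) - 1 - (s : ℤ) = ((j : ℤ) - (s : ℤ)) + 1 := by
      push_cast; ring
    have h2 : nuqLevels s (j + 1 + 1) = 2 ^ (((j + 1 + 1 : ℕ) : ℤ) - 1 - (s : ℤ)) :=
      if_neg (by omega)
    rw [h2, h1, zpow_add_one₀ (two_ne_zero), hxd]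
    ring
  have hlev : levIdx (nuqLevels s) s R = j + 1 := by
    apply IsGreatest.csSup_eq
    constructor
    · exact ⟨hjs', by rw [hlow, hRx]; linarith⟩
    · rintro k ⟨hk, hkR⟩
      by_contra hkk
      push_neg at hkk
      have h2 : j + 1 + 1 ≤ k := hkk
      have hk0 : k ≠ 0 := by omega
      have : nuqLevels s k = 2 ^ ((k : ℤ) - 1 - (s : ℤ)) := by simp [nuqLevels, hk0]
      have hmono : (2:ℝ) ^ ((j : ℤ) - (s : ℤ) + 1) ≤ 2 ^ ((k : ℤ) - 1 - (s : ℤ)) := by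
        apply zpow_le_zpow_right₀ one_le_two
        omega
      rw [this] at hkR
      rw [zpow_add_one₀ (two_ne_zero)] at hmono
      rw [hRx] at hkR
      nlinarith
  have hquantP : quantP (nuqLevels s) s R = 1/3 := by
    rw [quantP, hlev, hlow, hup, hRx,
      show (4:ℝ)/3 * x - x = x * (1/3) by ring, show 2 * x - x = x by ring,
      mul_comm, mul_div_assoc, div_self hx0.ne', mul_one]
  -- pointwise simplification
  set G : ℝ → ℝ := fun t => ‖v‖ ^ 2 * ((if t ≤ (1:ℝ)/3 then 2 * x else x) - R) ^ 2 with hGd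
  have hG : ∀ t : ℝ, G t = ‖v‖ ^ 2 * ((if t ≤ (1:ℝ)/3 then 2 * x else x) - R) ^ 2 :=
    fun t => rfl
  have hsign : Real.sign r ^ 2 = 1 := by
    rcases hr.lt_or_gt with h | h
    · rw [Real.sign_of_neg h]; norm_num
    · rw [Real.sign_of_pos h]; norm_num
  have hvR : ‖v‖ * R = |r| := by
    rw [hnorm, hRd]; field_simp
  have hrR : r = Real.sign r * (‖v‖ * R) := by
    rw [hvR]
    rcases hr.lt_or_gt with h | h
    · rw [Real.sign_of_neg h, abs_of_neg h]; ring
    · rw [Real.sign_of_pos h, abs_of_pos h, one_mul]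
  have hInt : ∀ u : Fin d → ℝ, ‖quant (nuqLevels s) s v u - v‖ ^ 2 = ∑ i : Fin d, G (u i) := by
    intro u
    rw [EuclideanSpace.norm_eq, Real.sq_sqrt (by positivity)]
    apply Finset.sum_congr rfl
    intro i _
    have happ : (quant (nuqLevels s) s v u - v) i = quant (nuqLevels s) s v u i - v i := rfl
    have hq : quant (nuqLevels s) s v u i = ‖v‖ * Real.sign r *
        (if u i ≤ (1:ℝ)/3 then 2 * x else x) := by
      rw [quant]
      simp only [PiLp.toLp_apply, hv i, hRi, hlev, hquantP, hlow, hup]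
    rw [Real.norm_eq_abs, sq_abs, happ, hq, hv i, hG]
    have key : ‖v‖ * Real.sign r * (if u i ≤ (1:ℝ)/3 then 2 * x else x) - r
        = (Real.sign r * ‖v‖) * ((if u i ≤ (1:ℝ)/3 then 2 * x else x) - R) := by
      linear_combination -hrR
    rw [key, mul_pow, mul_pow, hsign, one_mul]
  -- measure-theoretic reduction
  set μ : Measure ℝ := volume.restrict (Set.Icc (0:ℝ) 1) with hμd
  haveI : IsProbabilityMeasure μ := ⟨by simp [hμd, Real.volume_Icc]⟩
  have hGmeas : Measurable G := by
    apply Measurable.mul measurable_const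
    apply Measurable.pow _ measurable_const
    apply Measurable.sub _ measurable_const
    exact Measurable.ite measurableSet_Iic measurable_const measurable_const
  set C : ℝ := ‖v‖ ^ 2 * (2 * x - R) ^ 2 + ‖v‖ ^ 2 * (x - R) ^ 2 with hCd
  have hGbd : ∀ t : ℝ, ‖G t‖ ≤ C := by
    intro t
    rw [Real.norm_eq_abs, hG t, hCd]
    by_cases h : t ≤ (1:ℝ)/3
    · rw [if_pos h, abs_of_nonneg (by positivity)]
      have := mul_nonneg (sq_nonneg ‖v‖) (sq_nonneg (x - R))
      linarith
    · rw [if_neg h, abs_of_nonneg (by positivity)]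
      have := mul_nonneg (sq_nonneg ‖v‖) (sq_nonneg (2 * x - R))
      linarith
  have hunif : unifCube d = Measure.pi (fun _ : Fin d => μ) := rfl
  haveI : IsProbabilityMeasure (unifCube d) := by
    rw [hunif]; infer_instance
  have hint_i : ∀ i : Fin d, Integrable (fun u : Fin d → ℝ => G (u i)) (unifCube d) := by
    intro i
    refine Integrable.mono' (integrable_const C)
      ((hGmeas.comp (measurable_pi_apply i)).aestronglyMeasurable) ?_
    filter_upwards with u using hGbd (u i)
  have hmap : ∀ i : Fin d, ∫ u, G (u i) ∂(unifCube d) = ∫ t, G t ∂μ := by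
    intro i
    have h := integral_map (μ := Measure.pi fun _ : Fin d => μ) (φ := Function.eval i)
      (measurable_pi_apply i).aemeasurable (f := G) hGmeas.aestronglyMeasurable
    rw [pi_map_eval' (fun _ : Fin d => μ) i] at h
    rw [hunif]
    simp only [Function.eval] at h
    exact h.symm
  -- compute the one-dimensional integral
  have hIoc_int : IntegrableOn G (Set.Ioc (1/3 : ℝ) 1) volume := by
    refine Integrable.mono' (integrable_const C) hGmeas.aestronglyMeasurable ?_
    filter_upwards with t using hGbd t
  have hIcc_int : IntegrableOn G (Set.Icc (0 : ℝ) (1/3)) volume := by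
    refine Integrable.mono' (integrable_const C) hGmeas.aestronglyMeasurable ?_
    filter_upwards with t using hGbd t
  have hsplit : ∫ t, G t ∂μ
      = (∫ t in Set.Icc (0:ℝ) (1/3), G t) + ∫ t in Set.Ioc (1/3:ℝ) 1, G t := by
    rw [hμd, ← Set.Icc_union_Ioc_eq_Icc (by norm_num : (0:ℝ) ≤ 1/3) (by norm_num : (1/3:ℝ) ≤ 1)]
    exact setIntegral_union
      ((Set.Iic_disjoint_Ioc le_rfl).mono Set.Icc_subset_Iic_self le_rfl)
      measurableSet_Ioc hIcc_int hIoc_int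
  have h1 : ∫ t in Set.Icc (0:ℝ) (1/3), G t = 1/3 * (‖v‖ ^ 2 * (2 * x - R) ^ 2) := by
    rw [setIntegral_congr_fun measurableSet_Icc
      (g := fun _ => ‖v‖ ^ 2 * (2 * x - R) ^ 2)
      (fun t ht => by rw [hG t, if_pos ht.2])]
    rw [setIntegral_const, Real.volume_real_Icc, smul_eq_mul]
    norm_num
  have h2 : ∫ t in Set.Ioc (1/3:ℝ) 1, G t = 2/3 * (‖v‖ ^ 2 * (x - R) ^ 2) := by
    rw [setIntegral_congr_fun measurableSet_Ioc
      (g := fun _ => ‖v‖ ^ 2 * (x - R) ^ 2)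
      (fun t ht => by rw [hG t, if_neg (not_le.mpr ht.1)])]
    rw [setIntegral_const, Real.volume_real_Ioc, smul_eq_mul]
    norm_num
  -- assemble
  have hx2 : x ^ 2 = 9 / (16 * d) := by
    rw [hjx, div_pow, mul_pow, Real.sq_sqrt hdR.le]
    norm_num
  calc ∫ u, ‖quant (nuqLevels s) s v u - v‖ ^ 2 ∂(unifCube d)
      = ∫ u, ∑ i : Fin d, G (u i) ∂(unifCube d) := by
        exact integral_congr_ae (Filter.Eventually.of_forall hInt)
    _ = ∑ i : Fin d, ∫ u, G (u i) ∂(unifCube d) :=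
        integral_finset_sum _ (fun i _ => hint_i i)
    _ = ∑ _i : Fin d, ∫ t, G t ∂μ := Finset.sum_congr rfl (fun i _ => hmap i)
    _ = (d : ℝ) * ∫ t, G t ∂μ := by
        rw [Finset.sum_const, Finset.card_univ, Fintype.card_fin, nsmul_eq_mul]
    _ = (d : ℝ) * (1/3 * (‖v‖ ^ 2 * (2 * x - R) ^ 2) + 2/3 * (‖v‖ ^ 2 * (x - R) ^ 2)) := by
        rw [hsplit, h1, h2]
    _ = ‖v‖ ^ 2 / 8 := by
        rw [hRx]
        have : (2 * x - 4/3 * x) ^ 2 = 4/9 * x ^ 2 := by ring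
        rw [this]
        have : (x - 4/3 * x) ^ 2 = 1/9 * x ^ 2 := by ring
        rw [this, hx2]
        field_simp
        ring
end
end
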